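/- Let σ be a 123-avoiding permutation of {1, …, n}, and let i be the least index with σ(i) < σ(i+1), setting i = n if σ is strictly decreasing. For 1 ≤ j ≤ n+1, let σ_j be the permutation of {1, …, n+1} obtained by inserting the value n+1 into position j of σ, i.e., σ_j = (σ(1), …, σ(j−1), n+1, σ(j), …, σ(n)). Then σ_j is 123-avoiding if and only if j ≤ i + 1; in particular, σ has exactly i + 1 successors under insertion that preserve 123-avoidance. -/

import Mathlib

/-- A function on `Fin n` is 123-avoiding if there are no indices `a < b < c`
with `σ a < σ b < σ c`. -/
def Avoids123 (n : ℕ) (σ : Fin n → Fin n) : Prop :=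
  ∀ a b c : Fin n, a < b → b < c → σ a < σ b → σ b < σ c → False

/-- Insertion of the largest value `n+1` into position `j+1` (1-based) of a
permutation of `{1, …, n}` (encoded 0-based on `Fin n`): the result is
`(σ(1), …, σ(j), n+1, σ(j+1), …, σ(n))` in 1-based notation. -/
def insertTop (n : ℕ) (σ : Fin n → Fin n) (j : Fin (n+1)) : Fin (n+1) → Fin (n+1) :=
  fun p =>
    if hpj : p = j then Fin.last n
    else if h : (p : ℕ) < (j : ℕ) then
      (σ ⟨(p : ℕ), by have := j.isLt; omega⟩).castSucc
    else
      (σ ⟨(p : ℕ) - 1, by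
        have hp := p.isLt
        have hj := j.isLt
        have h2 : (p : ℕ) ≠ (j : ℕ) := fun hh => hpj (Fin.ext hh)
        omega⟩).castSucc

lemma insertTop_self (n : ℕ) (σ : Fin n → Fin n) (j : Fin (n+1)) :
    insertTop n σ j j = Fin.last n := by
  simp [insertTop]

lemma insertTop_of_lt (n : ℕ) (σ : Fin n → Fin n) (j p : Fin (n+1)) (h : (p:ℕ) < (j:ℕ)) :
    insertTop n σ j p = (σ ⟨(p:ℕ), by have := j.isLt; omega⟩).castSucc := by
  have hpj : p ≠ j := by intro e; subst e; omega
  simp [insertTop, hpj, h]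

lemma insertTop_of_gt (n : ℕ) (σ : Fin n → Fin n) (j p : Fin (n+1)) (h : (j:ℕ) < (p:ℕ)) :
    insertTop n σ j p = (σ ⟨(p:ℕ) - 1, by have := p.isLt; omega⟩).castSucc := by
  have hpj : p ≠ j := by intro e; subst e; omega
  have h2 : ¬ (p:ℕ) < (j:ℕ) := by omega
  simp [insertTop, hpj, h2]

lemma sigma_dec (n : ℕ) (σ : Fin n → Fin n) (i : ℕ)
    (hdesc : ∀ k : ℕ, 1 ≤ k → k < i → ∀ hk : k < n, σ ⟨k, hk⟩ < σ ⟨k - 1, by omega⟩) :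
    ∀ b a : ℕ, a < b → b < i → ∀ (hb : b < n) (ha : a < n), σ ⟨b, hb⟩ < σ ⟨a, ha⟩ := by
  intro b
  induction b with
  | zero => intro a h; omega
  | succ m ih =>
    intro a hab hbi hb ha
    have hm : m < n := by omega
    have h1 : σ ⟨m+1, hb⟩ < σ ⟨m, hm⟩ := by
      have := hdesc (m+1) (by omega) hbi hb
      simpa using this
    rcases Nat.lt_or_ge a m with h | h
    · exact lt_trans h1 (ih a h (by omega) hm ha)
    · have : a = m := by omega
      subst this; exact h1

set_option maxHeartbeats 1000000 in
lemma key (n : ℕ) (σ : Equiv.Perm (Fin n))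
    (hσ : Avoids123 n σ) (i : ℕ) (hi1 : 1 ≤ i) (hin : i ≤ n)
    (hdesc : ∀ k : ℕ, 1 ≤ k → k < i → ∀ hk : k < n, σ ⟨k, hk⟩ < σ ⟨k - 1, by omega⟩)
    (hasc : ∀ h : i < n, σ ⟨i - 1, Nat.lt_of_le_of_lt (Nat.sub_le i 1) h⟩ < σ ⟨i, h⟩) (j : Fin (n+1)) :
    Avoids123 (n+1) (insertTop n σ j) ↔ (j:ℕ) ≤ i := by
  constructor
  · intro hA
    by_contra h
    push_neg at h
    have hiln : i < n := by have := j.isLt; omega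
    refine hA ⟨i-1, by omega⟩ ⟨i, by omega⟩ j ?_ ?_ ?_ ?_
    · exact Fin.mk_lt_mk.2 (by omega)
    · exact Fin.lt_def.2 (by simpa using h)
    · rw [insertTop_of_lt n σ j ⟨i-1, by omega⟩ (by simpa using by omega),
        insertTop_of_lt n σ j ⟨i, by omega⟩ (by simpa using h)]
      exact Fin.castSucc_lt_castSucc_iff.2 (hasc hiln)
    · rw [insertTop_of_lt n σ j ⟨i, by omega⟩ (by simpa using h), insertTop_self]
      exact Fin.castSucc_lt_last _
  · intro hji a b c hab hbc h1 h2
    rcases eq_or_ne a j with rfl | haj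
    · rw [insertTop_self] at h1
      exact absurd h1 (not_lt.2 (Fin.le_last _))
    rcases eq_or_ne b j with rfl | hbj
    · rw [insertTop_self] at h2
      exact absurd h2 (not_lt.2 (Fin.le_last _))
    rcases eq_or_ne c j with rfl | hcj
    · -- a < b < j ≤ i : decreasing part contradicts σ a < σ b
      have hbv : (b:ℕ) < (c:ℕ) := hbc
      have hav : (a:ℕ) < (b:ℕ) := hab
      rw [insertTop_of_lt n σ c a (by omega), insertTop_of_lt n σ c b (by omega)] at h1
      have h1' : σ ⟨(a:ℕ), by omega⟩ < σ ⟨(b:ℕ), by omega⟩ :=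
        Fin.castSucc_lt_castSucc_iff.1 h1
      exact absurd h1' (not_lt.2 (le_of_lt
        (sigma_dec n σ i hdesc (b:ℕ) (a:ℕ) hav (by omega) (by omega) (by omega))))
    · -- none equal j
      have hav : (a:ℕ) ≠ (j:ℕ) := fun e => haj (Fin.ext e)
      have hbv : (b:ℕ) ≠ (j:ℕ) := fun e => hbj (Fin.ext e)
      have hcv : (c:ℕ) ≠ (j:ℕ) := fun e => hcj (Fin.ext e)
      have hab' : (a:ℕ) < (b:ℕ) := hab
      have hbc' : (b:ℕ) < (c:ℕ) := hbc
      have hc := c.isLt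
      -- index function
      rcases Nat.lt_or_ge (a:ℕ) (j:ℕ) with haL | haG
      · rcases Nat.lt_or_ge (b:ℕ) (j:ℕ) with hbL | hbG
        · rcases Nat.lt_or_ge (c:ℕ) (j:ℕ) with hcL | hcG
          · rw [insertTop_of_lt n σ j a haL, insertTop_of_lt n σ j b hbL] at h1
            rw [insertTop_of_lt n σ j b hbL, insertTop_of_lt n σ j c hcL] at h2
            exact hσ ⟨(a:ℕ), by omega⟩ ⟨(b:ℕ), by omega⟩ ⟨(c:ℕ), by omega⟩
              (by exact Fin.mk_lt_mk.2 (by omega)) (Fin.mk_lt_mk.2 (by omega))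
              (Fin.castSucc_lt_castSucc_iff.1 h1) (Fin.castSucc_lt_castSucc_iff.1 h2)
          · rw [insertTop_of_lt n σ j a haL, insertTop_of_lt n σ j b hbL] at h1
            rw [insertTop_of_lt n σ j b hbL, insertTop_of_gt n σ j c (by omega)] at h2
            exact hσ ⟨(a:ℕ), by omega⟩ ⟨(b:ℕ), by omega⟩ ⟨(c:ℕ)-1, by omega⟩
              (Fin.mk_lt_mk.2 (by omega)) (Fin.mk_lt_mk.2 (by omega))
              (Fin.castSucc_lt_castSucc_iff.1 h1) (Fin.castSucc_lt_castSucc_iff.1 h2)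
        · have hcG : (j:ℕ) < (c:ℕ) := by omega
          have hbG' : (j:ℕ) < (b:ℕ) := by omega
          rw [insertTop_of_lt n σ j a haL, insertTop_of_gt n σ j b hbG'] at h1
          rw [insertTop_of_gt n σ j b hbG', insertTop_of_gt n σ j c hcG] at h2
          exact hσ ⟨(a:ℕ), by omega⟩ ⟨(b:ℕ)-1, by omega⟩ ⟨(c:ℕ)-1, by omega⟩
            (Fin.mk_lt_mk.2 (by omega)) (Fin.mk_lt_mk.2 (by omega))
            (Fin.castSucc_lt_castSucc_iff.1 h1) (Fin.castSucc_lt_castSucc_iff.1 h2)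
      · have haG' : (j:ℕ) < (a:ℕ) := by omega
        rw [insertTop_of_gt n σ j a haG', insertTop_of_gt n σ j b (by omega)] at h1
        rw [insertTop_of_gt n σ j b (by omega), insertTop_of_gt n σ j c (by omega)] at h2
        exact hσ ⟨(a:ℕ)-1, by omega⟩ ⟨(b:ℕ)-1, by omega⟩ ⟨(c:ℕ)-1, by omega⟩
          (Fin.mk_lt_mk.2 (by omega)) (Fin.mk_lt_mk.2 (by omega))
          (Fin.castSucc_lt_castSucc_iff.1 h1) (Fin.castSucc_lt_castSucc_iff.1 h2)

/-- West's succession rule for 123-avoiding permutations. Let `σ` be a 123-avoiding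
permutation of `{1, …, n}` (encoded 0-based on `Fin n`), and let `i` be the least
1-based index with `σ(i) < σ(i+1)` (with `i = n` if `σ` is strictly decreasing).
Then the permutation `σ_j` of `{1, …, n+1}` obtained by inserting `n+1` into
position `j` (1-based, `1 ≤ j ≤ n+1`) is 123-avoiding iff `j ≤ i + 1`; in
particular exactly `i + 1` of the insertions preserve 123-avoidance. -/
theorem insertTop_avoids123_iff (n : ℕ) (hn : 1 ≤ n) (σ : Equiv.Perm (Fin n))
    (hσ : Avoids123 n σ) (i : ℕ) (hi1 : 1 ≤ i) (hin : i ≤ n)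
    (hdesc : ∀ k : ℕ, 1 ≤ k → k < i → ∀ hk : k < n, σ ⟨k, hk⟩ < σ ⟨k - 1, by omega⟩)
    (hasc : ∀ h : i < n, σ ⟨i - 1, by omega⟩ < σ ⟨i, h⟩) :
    (∀ j : ℕ, (hj1 : 1 ≤ j) → (hj2 : j ≤ n + 1) →
        (Avoids123 (n+1) (insertTop n σ ⟨j - 1, by omega⟩) ↔ j ≤ i + 1)) ∧
    Nat.card {j : Fin (n+1) // Avoids123 (n+1) (insertTop n σ j)} = i + 1 := by
  constructor
  · intro j hj1 hj2
    rw [key n σ hσ i hi1 hin hdesc hasc ⟨j-1, by omega⟩]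
    simp only [Fin.val_mk]
    omega
  · have e : {j : Fin (n+1) // Avoids123 (n+1) (insertTop n σ j)} ≃ {j : Fin (n+1) // (j:ℕ) ≤ i} :=
      Equiv.subtypeEquivRight (fun j => key n σ hσ i hi1 hin hdesc hasc j)
    rw [Nat.card_congr e]
    have e2 : {j : Fin (n+1) // (j:ℕ) ≤ i} ≃ Fin (i+1) :=
      { toFun := fun x => ⟨x.1, by omega⟩
        invFun := fun k => ⟨⟨k, by have := k.isLt; omega⟩, show (k:ℕ) ≤ i by have := k.isLt; omega⟩
        left_inv := fun x => Subtype.ext (Fin.ext rfl)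
        right_inv := fun k => rfl }
    rw [Nat.card_congr e2, Nat.card_eq_fintype_card, Fintype.card_fin]
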